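/- Let (Ω,T) be a minimal subshift over a finite alphabet A with associated set of words W, and for n ≥ 1 let m(n) = min{|x| : x is a return word of some v ∈ W with |v| = n}. Then the following are equivalent: (i) (Ω,T) is aperiodic, i.e. no ω ∈ Ω satisfies T^p ω = ω for some p ≥ 1; (ii) m(n) → ∞ as n → ∞. -/

import Mathlib

open Filter Topology

namespace SubshiftErgodic

variable {A : Type*}

/-- The shift map `T` on two-sided sequences over `A`: `(T ω) n = ω (n+1)`. -/
def shift (ω : ℤ → A) : ℤ → A := fun n => ω (n + 1)

/-- The `n`-th power of the shift: `(shiftZ n ω) k = ω (k + n)`. -/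
def shiftZ (n : ℤ) (ω : ℤ → A) : ℤ → A := fun k => ω (k + n)

/-- `Ω` is a subshift: a closed, shift-invariant subset of `A^ℤ`. -/
def IsSubshift [TopologicalSpace A] (Ω : Set (ℤ → A)) : Prop :=
  IsClosed Ω ∧ shift '' Ω = Ω

/-- Minimality: every orbit `{T^n ω : n ∈ ℤ}` is dense in `Ω`. -/
def IsMinimal [TopologicalSpace A] (Ω : Set (ℤ → A)) : Prop :=
  ∀ ω ∈ Ω, Ω ⊆ closure {ρ | ∃ n : ℤ, ρ = shiftZ n ω}

/-- The finite word `w` occurs in the sequence `ω` at position `k`. -/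
def OccursAt (w : List A) (ω : ℤ → A) (k : ℤ) : Prop :=
  ∀ i : Fin w.length, ω (k + (i : ℕ)) = w.get i

/-- The set `W = W(Ω)` of finite words occurring as factors of elements of `Ω`. -/
def words (Ω : Set (ℤ → A)) : Set (List A) :=
  {w | ∃ ω ∈ Ω, ∃ k : ℤ, OccursAt w ω k}

/-- `v` occurs as a factor of the finite word `w` at position `i`. -/
def OccursIn (v w : List A) (i : ℕ) : Prop :=
  i + v.length ≤ w.length ∧ v <+: w.drop i

/-- `♯_v(w)`: the number of occurrences of `v` as a factor of `w`. -/
noncomputable def occ (v w : List A) : ℕ :=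
  {i : ℕ | OccursIn v w i}.ncard

/-- `z` is a return word of `u` (relative to the set of words `W`). -/
def IsReturnWord (W : Set (List A)) (z u : List A) : Prop :=
  z ∈ W ∧ z ++ u ∈ W ∧ occ u (z ++ u) = 2 ∧ u <+: z ++ u

/-- The maximal number of pairwise disjoint occurrences of `v` as a factor of `w`. -/
noncomputable def maxDisjoint (v w : List A) : ℕ :=
  sSup {m : ℕ | ∃ s : Fin m → ℕ, (∀ i, OccursIn v w (s i)) ∧
    ∀ i j : Fin m, i < j → s i + v.length ≤ s j}

/-- The filter expressing `|w| → ∞` along words `w ∈ W`. -/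
def wordsFilter (W : Set (List A)) : Filter (List A) :=
  ⨅ L : ℕ, Filter.principal {w | w ∈ W ∧ L ≤ w.length}

/-- `lim_{|w| → ∞} g w = x` over `w ∈ W`: for every `ε > 0` there is `L` with
`‖g w - x‖ ≤ ε` for all `w ∈ W` with `|w| ≥ L`. -/
def TendstoWords {B : Type*} [SeminormedAddCommGroup B] (W : Set (List A))
    (g : List A → B) (x : B) : Prop :=
  ∀ ε : ℝ, 0 < ε → ∃ L : ℕ, ∀ w ∈ W, L ≤ w.length → ‖g w - x‖ ≤ ε

/-- `liminf_{|w| → ∞} g w` over `w ∈ W`, valued in the extended reals. -/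
noncomputable def liminfWords (W : Set (List A)) (g : List A → ℝ) : EReal :=
  Filter.liminf (fun w => (g w : EReal)) (wordsFilter W)

/-- `limsup_{|w| → ∞} g w` over `w ∈ W`, valued in the extended reals. -/
noncomputable def limsupWords (W : Set (List A)) (g : List A → ℝ) : EReal :=
  Filter.limsup (fun w => (g w : EReal)) (wordsFilter W)

/-- `ν(v) = liminf_{|w| → ∞} l_v(w)/|w|`, where
`l_v(w) = (max number of pairwise disjoint copies of v in w) ⬝ |v|`. -/
noncomputable def nu (W : Set (List A)) (v : List A) : EReal :=
  liminfWords W (fun w => ((maxDisjoint v w * v.length : ℕ) : ℝ) / (w.length : ℝ))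

/-- Condition (PQ): uniform positivity of quasiweights. -/
def PQ (W : Set (List A)) : Prop :=
  ∃ C : ℝ, 0 < C ∧ ∀ v ∈ W, v ≠ [] → (C : EReal) ≤ nu W v

/-- Unique ergodicity: all word frequencies `♯_v(w)/|w|` converge as `|w| → ∞`. -/
def UniquelyErgodic (Ω : Set (ℤ → A)) : Prop :=
  ∀ v ∈ words Ω, ∃ x : ℝ,
    TendstoWords (words Ω) (fun w => (occ v w : ℝ) / (w.length : ℝ)) x

/-- `F : W → ℝ` is subadditive. -/
def IsSubadditive (W : Set (List A)) (F : List A → ℝ) : Prop :=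
  ∀ a b : List A, a ∈ W → b ∈ W → a ++ b ∈ W → F (a ++ b) ≤ F a + F b

/-- `F^(n) = max { F v / |v| : v ∈ W, |v| = n }`. -/
noncomputable def wordSup (W : Set (List A)) (F : List A → ℝ) (n : ℕ) : ℝ :=
  sSup ((fun v => F v / (v.length : ℝ)) '' {v | v ∈ W ∧ v.length = n})

/-- Condition (SET): the uniform subadditive ergodic theorem holds, i.e. for every
subadditive `F` the limit `lim_{|w|→∞} F(w)/|w|` exists and equals `inf_{n ≥ 1} F^(n)`
(in the extended reals). -/
def SET (W : Set (List A)) : Prop :=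
  ∀ F : List A → ℝ, IsSubadditive W F →
    Filter.Tendsto (fun w => ((F w / (w.length : ℝ) : ℝ) : EReal)) (wordsFilter W)
      (nhds (⨅ n : {n : ℕ // 1 ≤ n}, ((wordSup W F n.1 : ℝ) : EReal)))

/-- A Banach-space-valued function `F : W → B` is additive. -/
def IsAdditive {B : Type*} [SeminormedAddCommGroup B] (W : Set (List A))
    (F : List A → B) : Prop :=
  ∃ D : ℝ, 0 < D ∧ ∃ c : ℕ → ℝ, Antitone c ∧ (∀ n, 0 ≤ c n) ∧
    Filter.Tendsto c Filter.atTop (nhds 0) ∧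
    (∀ vs : List (List A), (∀ v ∈ vs, v ∈ W) → vs.flatten ∈ W →
      ‖F vs.flatten - (vs.map F).sum‖ ≤ (vs.map fun v => c v.length * (v.length : ℝ)).sum) ∧
    ∀ v ∈ W, ‖F v‖ ≤ D * (v.length : ℝ)

/-- Condition (HP): powers in `W` have uniformly bounded exponent. -/
def HP (W : Set (List A)) : Prop :=
  ∃ N : ℕ, 0 < N ∧ ∀ v : List A, v ≠ [] → ∀ k : ℕ,
    (List.replicate k v).flatten ∈ W → k ≤ N

/-- Condition (PW): uniform positivity of weights. -/
def PW (W : Set (List A)) : Prop :=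
  ∃ E : ℝ, 0 < E ∧ ∀ v ∈ W, v ≠ [] →
    (E : EReal) ≤ liminfWords W (fun w => ((occ v w * v.length : ℕ) : ℝ) / (w.length : ℝ))

/-- Linear repetitivity. -/
def LinearlyRepetitive (W : Set (List A)) : Prop :=
  ∃ D : ℝ, 0 < D ∧ ∀ v ∈ W, v ≠ [] → ∀ w ∈ W, D * (v.length : ℝ) ≤ (w.length : ℝ) →
    v <:+: w

/-- Aperiodicity: no element of `Ω` is periodic. -/
def Aperiodic (Ω : Set (ℤ → A)) : Prop :=
  ∀ ω ∈ Ω, ∀ p : ℕ, 1 ≤ p → shiftZ (p : ℤ) ω ≠ ω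

/-- `m(n)`: the minimal length of a return word of a word of length `n` in `W`. -/
noncomputable def mRet (W : Set (List A)) (n : ℕ) : ℕ :=
  sInf {k : ℕ | ∃ v z : List A, v ∈ W ∧ v.length = n ∧ IsReturnWord W z v ∧ z.length = k}

/-- `k_ω^w`: the minimal nonnegative position at which `w` occurs in `ω`. -/
noncomputable def firstOcc (ω : ℤ → A) (w : List A) : ℕ :=
  sInf {k : ℕ | OccursAt w ω (k : ℤ)}

/-- `F_ω(w) = ∑_{j=0}^{|w|-1} f(T^{k_ω^w + j} ω)`. -/
noncomputable def birkhoffF {B : Type*} [AddCommMonoid B] (f : (ℤ → A) → B)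
    (ω : ℤ → A) (w : List A) : B :=
  ∑ j ∈ Finset.range w.length, f (shiftZ ((firstOcc ω w : ℤ) + (j : ℤ)) ω)


/-! ### auxiliary lemmas -/

lemma shiftZ_shiftZ (a b : ℤ) (ω : ℤ → A) : shiftZ a (shiftZ b ω) = shiftZ (a + b) ω := by
  funext k; simp [shiftZ, add_assoc]

lemma shiftZ_zero (ω : ℤ → A) : shiftZ 0 ω = ω := by funext k; simp [shiftZ]

lemma shiftZ_mem [TopologicalSpace A] {Ω : Set (ℤ → A)} (hΩ : IsSubshift Ω) :
    ∀ (n : ℤ) {ω : ℤ → A}, ω ∈ Ω → shiftZ n ω ∈ Ω := by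
  have h1 : ∀ {ω : ℤ → A}, ω ∈ Ω → shiftZ 1 ω ∈ Ω := by
    intro ω hω
    have : shift ω ∈ shift '' Ω := ⟨ω, hω, rfl⟩
    rwa [hΩ.2] at this
  have hm1 : ∀ {ω : ℤ → A}, ω ∈ Ω → shiftZ (-1) ω ∈ Ω := by
    intro ω hω
    rw [← hΩ.2] at hω
    obtain ⟨ω', hω', rfl⟩ := hω
    have he : shiftZ (-1) (shift ω') = ω' := by
      funext k; simp [shiftZ, shift]
    rw [he]; exact hω'
  intro n
  induction n using Int.induction_on with
  | zero => intro ω hω; rwa [shiftZ_zero]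
  | succ n ih =>
      intro ω hω
      have := h1 (ih hω)
      rwa [shiftZ_shiftZ, add_comm] at this
  | pred n ih =>
      intro ω hω
      have := hm1 (ih hω)
      rw [shiftZ_shiftZ] at this
      convert this using 2
      ring

def readWord (ρ : ℤ → A) (k : ℤ) (L : ℕ) : List A := List.ofFn fun i : Fin L => ρ (k + i)

@[simp] lemma readWord_length (ρ : ℤ → A) (k : ℤ) (L : ℕ) : (readWord ρ k L).length = L := by
  simp [readWord]

lemma readWord_getElem (ρ : ℤ → A) (k : ℤ) (L : ℕ) {i : ℕ} (h : i < (readWord ρ k L).length) :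
    (readWord ρ k L)[i] = ρ (k + i) := by
  simp [readWord]

lemma occursAt_readWord (ρ : ℤ → A) (k : ℤ) (L : ℕ) : OccursAt (readWord ρ k L) ρ k := by
  intro i
  rw [List.get_eq_getElem, readWord_getElem]

lemma eq_readWord {w : List A} {ρ : ℤ → A} {k : ℤ} (h : OccursAt w ρ k) :
    w = readWord ρ k w.length := by
  apply List.ext_getElem (by simp)
  intro i h1 h2
  rw [readWord_getElem]
  have := h ⟨i, h1⟩
  simp only [List.get_eq_getElem] at this
  exact this.symm

lemma occursAt_of_eq_readWord {w : List A} {ρ : ℤ → A} {k : ℤ} (h : w = readWord ρ k w.length) :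
    OccursAt w ρ k := by
  rw [h]; exact occursAt_readWord ρ k w.length

lemma readWord_mem_words {Ω : Set (ℤ → A)} {ρ : ℤ → A} (hρ : ρ ∈ Ω) (k : ℤ) (L : ℕ) :
    readWord ρ k L ∈ words Ω := ⟨ρ, hρ, k, occursAt_readWord ρ k L⟩

lemma readWord_drop (ρ : ℤ → A) (k : ℤ) (L i : ℕ) :
    (readWord ρ k L).drop i = readWord ρ (k + i) (L - i) := by
  apply List.ext_getElem (by simp)
  intro j h1 h2
  rw [List.getElem_drop, readWord_getElem, readWord_getElem]
  push_cast
  ring_nf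

lemma readWord_take (ρ : ℤ → A) (k : ℤ) (L a : ℕ) :
    (readWord ρ k L).take a = readWord ρ k (min a L) := by
  apply List.ext_getElem (by simp)
  intro j h1 h2
  rw [List.getElem_take, readWord_getElem]
  rw [readWord_getElem]

lemma readWord_append (ρ : ℤ → A) (k : ℤ) (a b : ℕ) :
    readWord ρ k a ++ readWord ρ (k + a) b = readWord ρ k (a + b) := by
  apply List.ext_getElem (by simp)
  intro j h1 h2
  rcases lt_or_ge j a with hj | hj
  · rw [List.getElem_append_left (by simpa using hj), readWord_getElem, readWord_getElem]
  · rw [List.getElem_append_right (by simpa using hj), readWord_getElem, readWord_getElem]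
    simp only [readWord_length]
    congr 1
    push_cast [Nat.cast_sub hj]
    ring

lemma prefix_readWord_iff {v : List A} {ρ : ℤ → A} {k : ℤ} {L : ℕ} (h : v.length ≤ L) :
    v <+: readWord ρ k L ↔ OccursAt v ρ k := by
  rw [List.prefix_iff_eq_take, readWord_take, min_eq_left h]
  constructor
  · exact occursAt_of_eq_readWord
  · exact eq_readWord

lemma occursIn_readWord_iff {v : List A} {ρ : ℤ → A} {k : ℤ} {L i : ℕ} :
    OccursIn v (readWord ρ k L) i ↔ i + v.length ≤ L ∧ OccursAt v ρ (k + i) := by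
  unfold OccursIn
  rw [readWord_length]
  apply and_congr_right
  intro hle
  rw [readWord_drop]
  exact prefix_readWord_iff (by omega)

lemma occursAt_shiftZ {u : List A} {ω : ℤ → A} {t k : ℤ} :
    OccursAt u (shiftZ t ω) k ↔ OccursAt u ω (k + t) := by
  unfold OccursAt shiftZ
  constructor
  · intro h i
    have := h i
    rwa [add_right_comm] at this
  · intro h i
    have := h i
    rw [add_right_comm]
    exact this

lemma isOpen_occursAt [TopologicalSpace A] [DiscreteTopology A] (u : List A) (k : ℤ) :
    IsOpen {ρ : ℤ → A | OccursAt u ρ k} := by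
  have he : {ρ : ℤ → A | OccursAt u ρ k} =
      ⋂ i : Fin u.length, (fun ρ : ℤ → A => ρ (k + (i : ℕ))) ⁻¹' {u.get i} := by
    ext ρ
    simp [OccursAt, Set.mem_iInter]
  rw [he]
  exact isOpen_iInter_of_finite fun i =>
    (isOpen_discrete _).preimage (continuous_apply _)

lemma continuous_shiftZ [TopologicalSpace A] (t : ℤ) :
    Continuous (shiftZ t : (ℤ → A) → ℤ → A) :=
  continuous_pi fun k => continuous_apply (k + t)

lemma occurs_in_every [TopologicalSpace A] [DiscreteTopology A] {Ω : Set (ℤ → A)}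
    (hmin : IsMinimal Ω) {u : List A} (hu : u ∈ words Ω) {ω' : ℤ → A} (hω' : ω' ∈ Ω) :
    ∃ t : ℤ, OccursAt u ω' t := by
  obtain ⟨ω, hω, k, hk⟩ := hu
  have hcl := hmin ω' hω' hω
  obtain ⟨ρ, hρU, hρorb⟩ := mem_closure_iff.mp hcl _ (isOpen_occursAt u k) hk
  obtain ⟨m, rfl⟩ := hρorb
  rw [Set.mem_setOf_eq, occursAt_shiftZ] at hρU
  exact ⟨k + m, hρU⟩

lemma exists_two_occ [Fintype A] [TopologicalSpace A] [DiscreteTopology A] {Ω : Set (ℤ → A)}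
    (hΩ : IsSubshift Ω) (hne : Ω.Nonempty) (hmin : IsMinimal Ω) {u : List A}
    (hu : u ∈ words Ω) :
    ∃ ρ ∈ Ω, OccursAt u ρ 0 ∧ ∃ j : ℕ, 0 < j ∧ OccursAt u ρ (j : ℤ) := by
  haveI : CompactSpace A := Finite.compactSpace
  have hcomp : IsCompact Ω := hΩ.1.isCompact
  have hcover : Ω ⊆ ⋃ m : ℤ, shiftZ m ⁻¹' {ρ : ℤ → A | OccursAt u ρ 0} := by
    intro ω' hω'
    obtain ⟨t, ht⟩ := occurs_in_every hmin hu hω'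
    refine Set.mem_iUnion.mpr ⟨t, ?_⟩
    show OccursAt u (shiftZ t ω') 0
    rw [occursAt_shiftZ, zero_add]
    exact ht
  obtain ⟨F, hF⟩ := hcomp.elim_finite_subcover _
    (fun m => (isOpen_occursAt u 0).preimage (continuous_shiftZ m)) hcover
  obtain ⟨ω₀, hω₀⟩ := hne
  set M : ℕ := F.sup Int.natAbs with hM
  have hpos : ∀ ω' ∈ Ω, ∃ m : ℤ, m.natAbs ≤ M ∧ OccursAt u ω' m := by
    intro ω' hω'
    obtain ⟨m, hmF, hm⟩ := Set.mem_iUnion₂.mp (hF hω')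
    refine ⟨m, Finset.le_sup hmF, ?_⟩
    have hm' : OccursAt u (shiftZ m ω') 0 := hm
    rwa [occursAt_shiftZ, zero_add] at hm'
  obtain ⟨a, haM, ha⟩ := hpos ω₀ hω₀
  obtain ⟨b, hbM, hb⟩ := hpos (shiftZ (2 * M + 1) ω₀) (shiftZ_mem hΩ _ hω₀)
  rw [occursAt_shiftZ] at hb
  set c : ℤ := b + (2 * M + 1) with hc
  have ha1 : a ≤ (M : ℤ) := by omega
  have hb1 : -(M : ℤ) ≤ b := by omega
  have hac : a < c := by omega
  refine ⟨shiftZ a ω₀, shiftZ_mem hΩ _ hω₀, ?_, (c - a).toNat, ?_, ?_⟩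
  · rw [occursAt_shiftZ, zero_add]; exact ha
  · omega
  · rw [occursAt_shiftZ]
    have : ((c - a).toNat : ℤ) + a = c := by omega
    rwa [this]

lemma exists_isReturnWord {Ω : Set (ℤ → A)} {ρ : ℤ → A} (hρ : ρ ∈ Ω)
    (u : List A) (h0 : OccursAt u ρ 0)
    (hS : {j : ℕ | 0 < j ∧ OccursAt u ρ (j : ℤ)}.Nonempty) :
    ∃ z : List A, IsReturnWord (words Ω) z u ∧
      z.length = sInf {j : ℕ | 0 < j ∧ OccursAt u ρ (j : ℤ)} := by
  set S := {j : ℕ | 0 < j ∧ OccursAt u ρ (j : ℤ)} with hSdef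
  obtain ⟨hq0, hqocc⟩ := Nat.sInf_mem hS
  set q := sInf S with hqdef
  set n := u.length with hn
  have hu0 : u = readWord ρ 0 n := by
    have := eq_readWord h0; rwa [← hn] at this
  have huq : u = readWord ρ (q : ℤ) n := by
    have := eq_readWord hqocc; rwa [← hn] at this
  have key : readWord ρ 0 q ++ u = readWord ρ 0 ((q + n : ℕ)) := by
    conv_lhs => rw [huq]
    have := readWord_append ρ 0 q n
    rw [zero_add] at this
    rw [this]
  refine ⟨readWord ρ 0 q, ⟨readWord_mem_words hρ 0 q, ?_, ?_, ?_⟩, by simp⟩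
  · rw [key]; exact readWord_mem_words hρ 0 _
  · rw [key]
    unfold occ
    have hset : {i : ℕ | OccursIn u (readWord ρ 0 ((q + n : ℕ))) i} = {0, q} := by
      ext i
      rw [Set.mem_setOf_eq, occursIn_readWord_iff]
      constructor
      · rintro ⟨hle, hocc⟩
        rw [zero_add] at hocc
        by_contra hne
        simp only [Set.mem_insert_iff, Set.mem_singleton_iff] at hne
        push_neg at hne
        have hiS : i ∈ S := ⟨Nat.pos_of_ne_zero hne.1, hocc⟩
        have h1 : q ≤ i := Nat.sInf_le hiS
        have h2 : i ≤ q := by omega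
        exact hne.2 (le_antisymm h2 h1)
      · rintro (rfl | rfl)
        · refine ⟨by omega, ?_⟩
          rw [zero_add]
          simpa using h0
        · exact ⟨le_refl _, by rw [zero_add]; exact hqocc⟩
    rw [hset, Set.ncard_pair (by omega : (0 : ℕ) ≠ q)]
  · rw [key, List.prefix_iff_eq_take, readWord_take, min_eq_left (by omega : u.length ≤ q + n)]
    exact hu0
lemma mRet_spec [Fintype A] [TopologicalSpace A] [DiscreteTopology A] {Ω : Set (ℤ → A)}
    (hΩ : IsSubshift Ω) (hne : Ω.Nonempty) (hmin : IsMinimal Ω) (n : ℕ) :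
    ∃ v z : List A, v ∈ words Ω ∧ v.length = n ∧ IsReturnWord (words Ω) z v ∧
      z.length = mRet (words Ω) n := by
  obtain ⟨ω₀, hω₀⟩ := hne
  have huW : readWord ω₀ 0 n ∈ words Ω := readWord_mem_words hω₀ 0 n
  obtain ⟨ρ, hρ, h0, j, hj0, hj⟩ := exists_two_occ hΩ ⟨ω₀, hω₀⟩ hmin huW
  obtain ⟨z, hz, _⟩ := exists_isReturnWord hρ (readWord ω₀ 0 n) h0 ⟨j, hj0, hj⟩
  have hKne : {k : ℕ | ∃ v z : List A, v ∈ words Ω ∧ v.length = n ∧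
      IsReturnWord (words Ω) z v ∧ z.length = k}.Nonempty :=
    ⟨z.length, readWord ω₀ 0 n, z, huW, by simp, hz, rfl⟩
  exact Nat.sInf_mem hKne

lemma second_occ_of_returnWord {W : Set (List A)} {z v : List A}
    (h : IsReturnWord W z v) :
    ∃ j : ℕ, 0 < j ∧ j ≤ z.length ∧ OccursIn v (z ++ v) j := by
  obtain ⟨_, _, hocc, hpre⟩ := h
  set w := z ++ v with hw
  have h0 : OccursIn v w 0 := ⟨by simp [hw], by simpa using hpre⟩
  have hfin : {i | OccursIn v w i}.Finite := by
    apply Set.Finite.subset (Set.finite_Icc 0 w.length)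
    intro i hi
    simp only [Set.mem_Icc]
    exact ⟨Nat.zero_le i, by have := hi.1; omega⟩
  have : ∃ j ∈ {i | OccursIn v w i}, j ≠ 0 := by
    by_contra hcon
    push_neg at hcon
    have hsub : {i | OccursIn v w i} ⊆ {0} := fun i hi => hcon i hi
    have hle := Set.ncard_le_ncard hsub (Set.finite_singleton 0)
    rw [Set.ncard_singleton] at hle
    unfold occ at hocc
    omega
  obtain ⟨j, hjmem, hjne⟩ := this
  refine ⟨j, Nat.pos_of_ne_zero hjne, ?_, hjmem⟩
  have := hjmem.1
  simp only [hw, List.length_append] at this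
  omega

lemma exists_periodic_piece [TopologicalSpace A] {Ω : Set (ℤ → A)} (hΩ : IsSubshift Ω)
    {z v : List A} (h : IsReturnWord (words Ω) z v) :
    ∃ ρ ∈ Ω, ∃ j : ℕ, 0 < j ∧ j ≤ z.length ∧
      ∀ i : ℕ, i < v.length → ρ (((i + j : ℕ) : ℤ)) = ρ ((i : ℕ) : ℤ) := by
  obtain ⟨j, hj0, hjz, hjocc⟩ := second_occ_of_returnWord h
  obtain ⟨_, hzvW, _, hpre⟩ := h
  set w := z ++ v with hw
  obtain ⟨ω, hω, k, hk⟩ := hzvW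
  refine ⟨shiftZ k ω, ?_, j, hj0, hjz, ?_⟩
  · exact shiftZ_mem hΩ k hω
  · intro i hi
    -- relate to getElem of w
    have hwlen : w.length = z.length + v.length := by simp [hw]
    have hiw : i < w.length := by omega
    have hijw : i + j < w.length := by omega
    have hρ : ∀ (t : ℕ) (ht : t < w.length), (shiftZ k ω) ((t : ℕ) : ℤ) = w[t]'ht := by
      intro t ht
      have := hk ⟨t, ht⟩
      simp only [List.get_eq_getElem] at this
      rw [← this]
      simp [shiftZ, add_comm]
    rw [hρ _ hijw, hρ _ hiw]
    have h1 : w[i]'hiw = v[i]'hi := (hpre.getElem hi).symm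
    have h3 := hjocc.2.getElem hi
    rw [List.getElem_drop] at h3
    calc w[i + j]'hijw = w[j + i]'(by omega) := by congr 1; omega
      _ = v[i]'hi := h3.symm
      _ = w[i]'hiw := h1.symm
lemma aperiodic_of_tendsto [TopologicalSpace A] {Ω : Set (ℤ → A)}
    (htend : Filter.Tendsto (mRet (words Ω)) Filter.atTop Filter.atTop) :
    Aperiodic Ω := by
  intro ω hω p hp hper
  have hk : ∀ k : ℤ, ω (k + p) = ω k := fun k => congrFun hper k
  have hle : ∀ n : ℕ, mRet (words Ω) n ≤ p := by
    intro n
    set u := readWord ω 0 n with hu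
    have h0 : OccursAt u ω 0 := occursAt_readWord ω 0 n
    have hpocc : OccursAt u ω (p : ℤ) := by
      intro i
      have h0i := h0 i
      rw [zero_add] at h0i
      rw [add_comm, hk]
      exact h0i
    obtain ⟨z, hz, hzl⟩ := exists_isReturnWord hω u h0 ⟨p, hp, hpocc⟩
    calc mRet (words Ω) n ≤ z.length :=
          Nat.sInf_le ⟨u, z, readWord_mem_words hω 0 n, by simp [hu], hz, rfl⟩
      _ = sInf {j : ℕ | 0 < j ∧ OccursAt u ω (j : ℤ)} := hzl
      _ ≤ p := Nat.sInf_le ⟨hp, hpocc⟩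
  obtain ⟨n, hn⟩ := (htend.eventually_ge_atTop (p + 1)).exists
  have := hle n
  omega

lemma tendsto_of_aperiodic [Fintype A] [TopologicalSpace A] [DiscreteTopology A]
    {Ω : Set (ℤ → A)} (hΩ : IsSubshift Ω) (hne : Ω.Nonempty) (hmin : IsMinimal Ω)
    (hap : Aperiodic Ω) :
    Filter.Tendsto (mRet (words Ω)) Filter.atTop Filter.atTop := by
  by_contra hcon
  rw [Filter.tendsto_atTop_atTop] at hcon
  push_neg at hcon
  obtain ⟨B, hB⟩ := hcon
  have freq : ∀ N : ℕ, ∃ (ρ : ℤ → A) (j n : ℕ), ρ ∈ Ω ∧ 0 < j ∧ j < B ∧ N ≤ n ∧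
      ∀ i : ℕ, i < n → ρ (((i + j : ℕ) : ℤ)) = ρ ((i : ℕ) : ℤ) := by
    intro N
    obtain ⟨n, hNn, hmn⟩ := hB N
    obtain ⟨v, z, hvW, hvl, hret, hzl⟩ := mRet_spec hΩ hne hmin n
    obtain ⟨ρ, hρ, j, hj0, hjz, hper⟩ := exists_periodic_piece hΩ hret
    exact ⟨ρ, j, n, hρ, hj0, by omega, hNn, by rw [← hvl]; exact hper⟩
  choose ρf jf nf hρf hj0 hjB hNn hperf using freq
  have hBpos : 0 < B := lt_of_le_of_lt (Nat.zero_le _) (hjB 0)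
  set g : ℕ → Fin B × (Fin B → A) :=
    fun N => (⟨jf N, hjB N⟩, fun t : Fin B => ρf N ((t : ℕ) : ℤ)) with hg
  obtain ⟨y, hy⟩ := Finite.exists_infinite_fiber g
  have hyinf : (g ⁻¹' {y}).Infinite := Set.infinite_coe_iff.mp hy
  obtain ⟨j₀, P⟩ := y
  set p : ℕ := (j₀ : ℕ) with hpdef
  have hpB : p < B := j₀.isLt
  have hjf : ∀ N, g N = (j₀, P) → jf N = p := by
    intro N hgN
    have h1 := congrArg Prod.fst hgN
    simp only [hg] at h1
    exact congrArg Fin.val h1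
  have hPf : ∀ N, g N = (j₀, P) → ∀ t : Fin B, ρf N ((t : ℕ) : ℤ) = P t := by
    intro N hgN t
    have h1 := congrArg Prod.snd hgN
    simp only [hg] at h1
    exact congrFun h1 t
  obtain ⟨N₀, hN₀⟩ := hyinf.nonempty
  have hp1 : 1 ≤ p := by
    rw [← hjf N₀ hN₀]
    exact hj0 N₀
  -- periodic evaluation inside the window
  have key1 : ∀ N, g N = (j₀, P) → ∀ t : ℕ, t ≤ nf N →
      ρf N ((t : ℕ) : ℤ) = ρf N ((t % p : ℕ) : ℤ) := by
    intro N hgN t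
    induction t using Nat.strong_induction_on with
    | _ t ih =>
      intro ht
      by_cases hlt : t < p
      · rw [Nat.mod_eq_of_lt hlt]
      · push_neg at hlt
        have hstep := hperf N (t - p) (by omega)
        rw [hjf N hgN] at hstep
        have h2 : (t - p) + p = t := by omega
        rw [h2] at hstep
        rw [hstep, ih (t - p) (by omega) (by omega)]
        congr 2
        conv_rhs => rw [← h2]
        rw [Nat.add_mod_right]
  have hpmlem : ∀ m : ℕ, m ≤ p * m := fun m => Nat.le_mul_of_pos_left m (by omega)
  -- choose fiber elements with large windows
  have pick : ∀ m : ℕ, ∃ N, g N = (j₀, P) ∧ p * m + m + 1 ≤ N := by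
    intro m
    obtain ⟨N, hNmem, hNgt⟩ := hyinf.exists_gt (p * m + m)
    exact ⟨N, hNmem, by omega⟩
  choose Nm hNm hNmge using pick
  have hpz : (0 : ℤ) < (p : ℤ) := by exact_mod_cast hp1
  set ωh : ℤ → A := fun i => P ⟨(i % (p : ℤ)).toNat, by
      have h1 : 0 ≤ i % (p : ℤ) := Int.emod_nonneg i hpz.ne'
      have h2 : i % (p : ℤ) < (p : ℤ) := Int.emod_lt_of_pos i hpz
      omega⟩ with hωh
  have agree : ∀ (m : ℕ) (i : ℤ), i.natAbs ≤ m →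
      shiftZ ((p : ℤ) * m) (ρf (Nm m)) i = ωh i := by
    intro m i hi
    have hgN := hNm m
    set N := Nm m with hN
    set q : ℕ := p * m with hq
    have hmq : m ≤ q := hpmlem m
    have hnf : q + m + 1 ≤ nf N := le_trans (hNmge m) (hNn N)
    have htnn : 0 ≤ i + (q : ℤ) := by omega
    set t : ℕ := (i + (q : ℤ)).toNat with ht
    have htz : (t : ℤ) = i + (q : ℤ) := by omega
    have htle : t ≤ nf N := by omega
    have hcast : ((p : ℤ) * m) = (q : ℤ) := by push_cast [hq]; ring
    have hstep1 : shiftZ ((p : ℤ) * m) (ρf N) i = ρf N ((t : ℕ) : ℤ) := by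
      simp only [shiftZ, hcast, htz]
    rw [hstep1, key1 N hgN t htle]
    have hmodlt : t % p < B := by
      have := Nat.mod_lt t (show 0 < p by omega)
      omega
    have h3 := hPf N hgN ⟨t % p, hmodlt⟩
    rw [h3]
    show P _ = P _
    congr 1
    apply Fin.ext
    show t % p = (i % (p : ℤ)).toNat
    have hmodz : ((t % p : ℕ) : ℤ) = i % (p : ℤ) := by
      have h4 : ((t % p : ℕ) : ℤ) = (t : ℤ) % (p : ℤ) := by push_cast; ring
      rw [h4, htz, hq]
      push_cast
      rw [show i + (p : ℤ) * m = i + m * p by ring]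
      exact Int.add_mul_emod_self_right ..
    omega
  have hσmem : ∀ m : ℕ, shiftZ ((p : ℤ) * m) (ρf (Nm m)) ∈ Ω :=
    fun m => shiftZ_mem hΩ _ (hρf (Nm m))
  have htends : Filter.Tendsto (fun m : ℕ => shiftZ ((p : ℤ) * m) (ρf (Nm m)))
      Filter.atTop (nhds ωh) := by
    rw [tendsto_pi_nhds]
    intro i
    apply Filter.Tendsto.congr' _ tendsto_const_nhds
    filter_upwards [Filter.eventually_ge_atTop i.natAbs] with m hm
    exact (agree m i hm).symm
  have hmem : ωh ∈ Ω := hΩ.1.mem_of_tendsto htends (Filter.Eventually.of_forall hσmem)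
  have hperiodic : shiftZ (p : ℤ) ωh = ωh := by
    funext i
    show P _ = P _
    congr 1
    apply Fin.ext
    show ((i + (p : ℤ)) % (p : ℤ)).toNat = (i % (p : ℤ)).toNat
    have : (i + (p : ℤ)) % (p : ℤ) = i % (p : ℤ) := by
      rw [show i + (p : ℤ) = i + 1 * p by ring]
      exact Int.add_mul_emod_self_right ..
    rw [this]
  exact hap ωh hmem p hp1 hperiodic

/-- A minimal subshift is aperiodic iff the minimal length `m(n)` of return
words of words of length `n` tends to infinity. -/
theorem aperiodic_iff_return_lengths_tendsto_atTop
    {A : Type*} [Fintype A] [Nonempty A] [TopologicalSpace A] [DiscreteTopology A]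
    (Ω : Set (ℤ → A)) (hΩ : IsSubshift Ω) (hne : Ω.Nonempty) (hmin : IsMinimal Ω) :
    Aperiodic Ω ↔ Filter.Tendsto (mRet (words Ω)) Filter.atTop Filter.atTop := by
  constructor
  · exact tendsto_of_aperiodic hΩ hne hmin
  · exact aperiodic_of_tendsto

end SubshiftErgodic
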